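/- Let n ≥ 1, k ≤ n, let u, w ∈ ℝ^n with u_i > 0 and w_i > 0 for all i, let q < 0, and let P_k = {p ∈ [0,1]^n : ∑_i p_i = k}. Suppose η ∈ ℝ and p* ∈ P_k satisfies p*_i = min(1, max(0, (η + log(w_i u_i)) / (−q · u_i))) for all i (and ∑_i p*_i = k). Then p* maximizes the Kolm welfare over P_k: for every p ∈ P_k, (1/q)·log(∑_i w_i exp(q u_i p_i)) ≤ (1/q)·log(∑_i w_i exp(q u_i p*_i)). -/

import Mathlib

/-- The set of allocation policies distributing `k` resources among `n` individuals. -/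
def Pk (n k : ℕ) : Set (Fin n → ℝ) :=
  {p | (∀ i, 0 ≤ p i ∧ p i ≤ 1) ∧ ∑ i, p i = (k : ℝ)}

theorem stmt_15 {n : ℕ} (hn : 0 < n) (k : ℕ) (hk : k ≤ n)
    (u w : Fin n → ℝ) (hu : ∀ i, 0 < u i) (hw : ∀ i, 0 < w i)
    (q : ℝ) (hq : q < 0)
    (η : ℝ)
    (pstar : Fin n → ℝ) (hpstar : pstar ∈ Pk n k)
    (hform : ∀ i, pstar i = min 1 (max 0 ((η + Real.log (w i * u i)) / (-q * u i)))) :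
    ∀ p ∈ Pk n k,
      (1 / q) * Real.log (∑ i, w i * Real.exp (q * (u i * p i)))
        ≤ (1 / q) * Real.log (∑ i, w i * Real.exp (q * (u i * pstar i))) := by
  intro p hp
  obtain ⟨hp01, hpsum⟩ := hp
  obtain ⟨hps01, hpssum⟩ := hpstar
  set c := q * Real.exp (-η) with hc
  -- per-coordinate KKT inequality
  have key : ∀ i, 0 ≤ (q * u i * w i * Real.exp (q * (u i * pstar i)) - c) * (p i - pstar i) := by
    intro i
    have hwu : (0:ℝ) < w i * u i := mul_pos (hw i) (hu i)
    set L := Real.log (w i * u i) with hL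
    set x := (η + L) / (-q * u i) with hx
    have hqu' : (0:ℝ) < -q * u i := mul_pos (by linarith) (hu i)
    have hexpL : Real.exp L = w i * u i := Real.exp_log hwu
    have hgx : q * u i * w i * Real.exp (q * (u i * x)) = c := by
      have hmul : x * (-q * u i) = η + L := div_mul_cancel₀ _ (ne_of_gt hqu')
      have h1 : q * (u i * x) = -(η + L) := by linear_combination -hmul
      have h2 : Real.exp (-(η + L)) = Real.exp (-η) / (w i * u i) := by
        rw [neg_add, Real.exp_add, Real.exp_neg L, hexpL]
        ring
      rw [h1, h2, hc]
      field_simp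
      rw [mul_assoc, mul_div_assoc, div_self (mul_ne_zero (hu i).ne' (hw i).ne'), mul_one]
    have hform' : pstar i = min 1 (max 0 x) := by
      rw [hform i, ← hL, ← hx]
    rcases le_or_gt 1 x with h1 | h1
    · -- pstar i = 1
      have hps : pstar i = 1 := by
        rw [hform', max_eq_right (by linarith), min_eq_left h1]
      have hqunn : q * u i * (x - 1) ≤ 0 :=
        mul_nonpos_of_nonpos_of_nonneg (le_of_lt (mul_neg_of_neg_of_pos hq (hu i))) (by linarith)
      have hE : Real.exp (q * (u i * x)) ≤ Real.exp (q * (u i * 1)) := by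
        apply Real.exp_le_exp.mpr
        nlinarith [hqunn]
      have hgle : q * u i * w i * Real.exp (q * (u i * pstar i)) - c ≤ 0 := by
        rw [hps, ← hgx]
        nlinarith [mul_nonneg (le_of_lt (mul_pos (mul_pos (neg_pos.mpr hq) (hu i)) (hw i)))
          (sub_nonneg.mpr hE)]
      have hple : p i - pstar i ≤ 0 := by
        rw [hps]; linarith [(hp01 i).2]
      nlinarith [mul_nonneg (neg_nonneg.2 hgle) (neg_nonneg.2 hple)]
    rcases le_or_gt x 0 with h0 | h0
    · -- pstar i = 0
      have hps : pstar i = 0 := by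
        rw [hform', max_eq_left h0, min_eq_right zero_le_one]
      have hqunn : 0 ≤ q * u i * x := by
        have := mul_nonneg (neg_nonneg.2 (le_of_lt (mul_neg_of_neg_of_pos hq (hu i)))) (neg_nonneg.2 h0)
        nlinarith [this]
      have hE : Real.exp (q * (u i * 0)) ≤ Real.exp (q * (u i * x)) := by
        apply Real.exp_le_exp.mpr
        nlinarith [hqunn]
      have hgge : 0 ≤ q * u i * w i * Real.exp (q * (u i * pstar i)) - c := by
        rw [hps, ← hgx]
        nlinarith [mul_nonneg (le_of_lt (mul_pos (mul_pos (neg_pos.mpr hq) (hu i)) (hw i)))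
          (sub_nonneg.mpr hE)]
      have hpge : 0 ≤ p i - pstar i := by
        rw [hps]; linarith [(hp01 i).1]
      exact mul_nonneg hgge hpge
    · -- interior: pstar i = x
      have hps : pstar i = x := by
        rw [hform', max_eq_right h0.le, min_eq_right h1.le]
      rw [hps, hgx]
      simp
  -- convexity lower bound for each term
  have conv : ∀ i, (q * u i * w i * Real.exp (q * (u i * pstar i))) * (p i - pstar i)
      ≤ w i * Real.exp (q * (u i * p i)) - w i * Real.exp (q * (u i * pstar i)) := by
    intro i
    have h := Real.add_one_le_exp (q * (u i * p i) - q * (u i * pstar i))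
    have hb : (0:ℝ) < Real.exp (q * (u i * pstar i)) := Real.exp_pos _
    have hab : Real.exp (q * (u i * p i))
        = Real.exp (q * (u i * pstar i)) * Real.exp (q * (u i * p i) - q * (u i * pstar i)) := by
      rw [← Real.exp_add]; ring_nf
    nlinarith [hw i, mul_le_mul_of_nonneg_left h hb.le]
  -- sum up
  have hzero : ∑ i, (p i - pstar i) = 0 := by
    rw [Finset.sum_sub_distrib, hpsum, hpssum]; ring
  have h1 : 0 ≤ ∑ i, (q * u i * w i * Real.exp (q * (u i * pstar i)) - c) * (p i - pstar i) :=
    Finset.sum_nonneg fun i _ => key i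
  have h2 : ∑ i, (q * u i * w i * Real.exp (q * (u i * pstar i)) - c) * (p i - pstar i)
      = ∑ i, (q * u i * w i * Real.exp (q * (u i * pstar i))) * (p i - pstar i)
        - c * ∑ i, (p i - pstar i) := by
    rw [Finset.mul_sum, ← Finset.sum_sub_distrib]
    congr 1; ext i; ring
  have h3 : 0 ≤ ∑ i, (q * u i * w i * Real.exp (q * (u i * pstar i))) * (p i - pstar i) := by
    rw [h2, hzero] at h1; linarith [h1]
  have h4 : ∑ i, (q * u i * w i * Real.exp (q * (u i * pstar i))) * (p i - pstar i)
      ≤ ∑ i, (w i * Real.exp (q * (u i * p i)) - w i * Real.exp (q * (u i * pstar i))) :=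
    Finset.sum_le_sum fun i _ => conv i
  have hsum : ∑ i, w i * Real.exp (q * (u i * pstar i)) ≤ ∑ i, w i * Real.exp (q * (u i * p i)) := by
    rw [Finset.sum_sub_distrib] at h4
    linarith
  have hApos : 0 < ∑ i, w i * Real.exp (q * (u i * pstar i)) :=
    Finset.sum_pos (fun i _ => mul_pos (hw i) (Real.exp_pos _)) (Finset.univ_nonempty_iff.mpr ⟨⟨0, hn⟩⟩)
  have hlog : Real.log (∑ i, w i * Real.exp (q * (u i * pstar i)))
      ≤ Real.log (∑ i, w i * Real.exp (q * (u i * p i))) :=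
    Real.log_le_log hApos hsum
  have hq' : (1/q : ℝ) ≤ 0 := by
    apply div_nonpos_of_nonneg_of_nonpos <;> linarith
  exact mul_le_mul_of_nonpos_left hlog hq'
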